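/- Let n > 1 be odd. Then in the dihedral group DihedralGroup n of order 2n, every subgroup whose order is p² for a prime p is cyclic; however, there exist primes p and q together with a subgroup of order p·q that is not cyclic. -/

import Mathlib

open DihedralGroup

/-- Map between dihedral groups induced by an additive hom of the rotation parts. -/
def dihedralMapAux (n q : ℕ) (ψ : ZMod q →+ ZMod n) : DihedralGroup q →* DihedralGroup n where
  toFun x := match x with
    | .r i => .r (ψ i)
    | .sr i => .sr (ψ i)
  map_one' := by simp [DihedralGroup.one_def, -DihedralGroup.r_zero]
  map_mul' := by
    rintro (i | i) (j | j) <;>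
      simp [r_mul_r, r_mul_sr, sr_mul_r, sr_mul_sr, map_add, map_sub]

/-- The cyclic "rotation" hom from `Multiplicative (ZMod n)`. -/
def rotHom (n : ℕ) : Multiplicative (ZMod n) →* DihedralGroup n where
  toFun i := DihedralGroup.r i.toAdd
  map_one' := by simp [DihedralGroup.one_def, -DihedralGroup.r_zero]
  map_mul' := by intro a b; simp [r_mul_r]

theorem dihedral_p_sq_conditions_not_pq_conditions (n : ℕ) (hn : 1 < n) (hodd : Odd n) :
    (∀ (H : Subgroup (DihedralGroup n)) (p : ℕ), p.Prime → Nat.card H = p ^ 2 → IsCyclic H) ∧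
      ∃ (p q : ℕ) (H : Subgroup (DihedralGroup n)),
        p.Prime ∧ q.Prime ∧ Nat.card H = p * q ∧ ¬ IsCyclic H := by
  have hn0 : n ≠ 0 := by omega
  haveI : NeZero n := ⟨hn0⟩
  constructor
  · intro H p hp hcard
    -- p is odd
    have hp2 : p ≠ 2 := by
      rintro rfl
      have hdvd : Nat.card H ∣ Nat.card (DihedralGroup n) :=
        Subgroup.card_subgroup_dvd_card H
      rw [hcard, DihedralGroup.nat_card] at hdvd
      have h2n : 2 ∣ n := by
        rcases hdvd with ⟨k, hk⟩
        exact ⟨k, by omega⟩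
      exact (Nat.not_even_iff_odd.mpr hodd) (even_iff_two_dvd.mpr h2n)
    -- every element of H is a rotation
    have hrot : ∀ x ∈ H, ∃ i : ZMod n, x = DihedralGroup.r i := by
      intro x hx
      cases x with
      | r i => exact ⟨i, rfl⟩
      | sr i =>
        exfalso
        have h2 : orderOf (⟨DihedralGroup.sr i, hx⟩ : H) = 2 := by
          rw [Subgroup.orderOf_mk, DihedralGroup.orderOf_sr]
        have hdvd : orderOf (⟨DihedralGroup.sr i, hx⟩ : H) ∣ Nat.card H :=
          orderOf_dvd_natCard _
        rw [h2, hcard] at hdvd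
        have h2p : 2 ∣ p := Nat.Prime.dvd_of_dvd_pow Nat.prime_two hdvd
        exact hp2 ((Nat.prime_dvd_prime_iff_eq Nat.prime_two hp).mp h2p).symm
    -- H is contained in the range of rotHom
    have hle : H ≤ (rotHom n).range := by
      intro x hx
      obtain ⟨i, rfl⟩ := hrot x hx
      exact ⟨Multiplicative.ofAdd i, rfl⟩
    haveI : IsCyclic ((rotHom n).range) :=
      isCyclic_of_surjective _ (rotHom n).rangeRestrict_surjective
    haveI : IsCyclic (H.subgroupOf (rotHom n).range) := Subgroup.isCyclic _
    exact isCyclic_of_surjective _ (Subgroup.subgroupOfEquivOfLe hle).surjective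
  · -- the non-cyclic part
    set q := n.minFac with hq
    have hqp : q.Prime := Nat.minFac_prime (by omega)
    have hqdvd : q ∣ n := Nat.minFac_dvd n
    have hq2 : q ≠ 2 := by
      intro h
      have h2n : 2 ∣ n := h ▸ hqdvd
      exact (Nat.not_even_iff_odd.mpr hodd) (even_iff_two_dvd.mpr h2n)
    haveI : NeZero q := ⟨hqp.ne_zero⟩
    -- the additive hom ZMod q →+ ZMod n
    set c : ZMod n := ((n / q : ℕ) : ZMod n) with hc
    have hqc : (zmultiplesHom (ZMod n)) c q = 0 := by
      simp only [zmultiplesHom_apply, natCast_zsmul, ← Nat.cast_smul_eq_nsmul (ZMod n)]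
      rw [hc, smul_eq_mul, ← Nat.cast_mul, Nat.mul_div_cancel' hqdvd, ZMod.natCast_self]
    set ψ : ZMod q →+ ZMod n := ZMod.lift q ⟨zmultiplesHom (ZMod n) c, hqc⟩ with hψ
    have hψval : ∀ j : ℕ, ψ (j : ZMod q) = ((j * (n / q) : ℕ) : ZMod n) := by
      intro j
      have hjq : ((j : ℤ) : ZMod q) = (j : ZMod q) := by push_cast; rfl
      rw [hψ, ← hjq, ZMod.lift_coe]
      simp only [zmultiplesHom_apply, hc]
      rw [natCast_zsmul, ← Nat.cast_smul_eq_nsmul (ZMod n), smul_eq_mul, ← Nat.cast_mul]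
    have hψinj : Function.Injective ψ := by
      intro a b hab
      have hz : ψ (a - b) = 0 := by rw [map_sub, hab, sub_self]
      set j := (a - b).val with hj
      have hjlt : j < q := ZMod.val_lt _
      have hjcast : (j : ZMod q) = a - b := by simp [hj, ZMod.natCast_val, ZMod.cast_id]
      rw [← hjcast, hψval j] at hz
      have hn_dvd : n ∣ j * (n / q) := (ZMod.natCast_eq_zero_iff _ _).mp hz
      have hnq_pos : 0 < n / q := Nat.div_pos (Nat.minFac_le (by omega)) hqp.pos
      have hn_eq : n = q * (n / q) := (Nat.mul_div_cancel' hqdvd).symm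
      have hqj : q ∣ j := by
        rcases hn_dvd with ⟨k, hk⟩
        have hk' : j * (n / q) = q * (n / q) * k := by rw [← hn_eq]; exact hk
        refine ⟨k, Nat.eq_of_mul_eq_mul_right hnq_pos ?_⟩
        calc j * (n / q) = q * (n / q) * k := hk'
          _ = q * k * (n / q) := by ring
      have hj0 : j = 0 := Nat.eq_zero_of_dvd_of_lt hqj hjlt
      have : a - b = 0 := by rw [← hjcast, hj0, Nat.cast_zero]
      exact sub_eq_zero.mp this
    -- the subgroup
    set φ := dihedralMapAux n q ψ with hφ
    have hφinj : Function.Injective φ := by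
      intro x y hxy
      cases x <;> cases y <;> simp [hφ, dihedralMapAux] at hxy ⊢ <;>
        first
          | exact hψinj hxy
          | exact hψinj (DihedralGroup.r.inj hxy)
          | exact hψinj (DihedralGroup.sr.inj hxy)
    refine ⟨2, q, φ.range, Nat.prime_two, hqp, ?_, ?_⟩
    · have hcard : Nat.card φ.range = Nat.card (DihedralGroup q) :=
        (Nat.card_congr (MonoidHom.ofInjective hφinj).toEquiv).symm
      rw [hcard, DihedralGroup.nat_card]
    · intro hcyc
      obtain ⟨g, hg⟩ := hcyc
      have h1 : φ (DihedralGroup.r 1) * φ (DihedralGroup.sr 0) =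
          φ (DihedralGroup.sr 0) * φ (DihedralGroup.r 1) := by
        set a : φ.range := ⟨φ (DihedralGroup.r 1), ⟨_, rfl⟩⟩ with ha
        set b : φ.range := ⟨φ (DihedralGroup.sr 0), ⟨_, rfl⟩⟩ with hb
        obtain ⟨k1, e1⟩ := hg a
        obtain ⟨k2, e2⟩ := hg b
        have hab : a * b = b * a := by
          rw [← e1, ← e2, ← zpow_add, ← zpow_add, add_comm]
        have h := Subtype.ext_iff.mp hab
        rw [Subgroup.coe_mul, Subgroup.coe_mul] at h
        exact h
      rw [← map_mul, ← map_mul] at h1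
      have h2 : DihedralGroup.r (1 : ZMod q) * DihedralGroup.sr 0 =
          DihedralGroup.sr 0 * DihedralGroup.r 1 := hφinj h1
      rw [r_mul_sr, sr_mul_r] at h2
      have h3 : (0 - 1 : ZMod q) = 0 + 1 := by injection h2
      have h4 : ((2 : ℕ) : ZMod q) = 0 := by
        push_cast
        linear_combination -h3
      have hdq : q ∣ 2 := (ZMod.natCast_eq_zero_iff 2 q).mp h4
      exact hq2 ((Nat.prime_dvd_prime_iff_eq hqp Nat.prime_two).mp hdq)
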